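/- Let W be a nonnegative real random variable with 0<E[W]<∞ and E[W²]<∞, let q≥3 be an integer, fix B=0, and assume there exists t_*>0 such that 𝓕_0''(t)>0 for 0<t<t_* and 𝓕_0''(t)<0 for t>t_*, where 𝓕_0(t)=E[(W/E[W])·(e^{tW}−1)/(e^{tW}+q−1)]. Then there exist β_0∈(0,∞) and β_1∈(β_0,∞) such that, writing β'=e^β−1, the stationarity equation E[(W/E[W])·(e^{β'Ws}−1)/(e^{β'Ws}+q−1)] = s has, among s∈[0,1]: only the trivial solution s_1(β,0)=0 when β∈(0,β_0); exactly three solutions s_1(β,0)=0 < s_2(β,0) < s_3(β,0) when β∈(β_0,β_1); and exactly two solutions s_1(β,0)=0 < s_3(β,0) when β>β_1. -/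

import Mathlib

open MeasureTheory Filter Topology Set

noncomputable def rfun (c x : ℝ) : ℝ := (Real.exp x - 1) / (Real.exp x + c)

noncomputable def rder (c x : ℝ) : ℝ := (1 + c) * Real.exp x / (Real.exp x + c) ^ 2

lemma denom_pos {c : ℝ} (hc : 0 < c) (x : ℝ) : 0 < Real.exp x + c := by
  positivity

lemma rfun_zero {c : ℝ} : rfun c 0 = 0 := by simp [rfun]

lemma rfun_lt_one {c : ℝ} (hc : 0 < c) (x : ℝ) : rfun c x < 1 := by
  rw [rfun, div_lt_one (denom_pos hc x)]; linarith

lemma abs_rfun_le_one {c : ℝ} (hc : 1 ≤ c) (x : ℝ) : |rfun c x| ≤ 1 := by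
  have hd := denom_pos (by linarith : (0:ℝ) < c) x
  rw [rfun, abs_div, div_le_one (by rwa [abs_of_pos hd])]
  rw [abs_of_pos hd]
  rcases le_or_gt 1 (Real.exp x) with h | h
  · rw [abs_of_nonneg (by linarith)]; linarith
  · rw [abs_of_neg (by linarith)]; have := Real.exp_pos x; linarith

lemma rfun_nonneg {c : ℝ} (hc : 0 < c) {x : ℝ} (hx : 0 ≤ x) : 0 ≤ rfun c x := by
  have := Real.one_le_exp hx
  exact div_nonneg (by linarith) (denom_pos hc x).le

lemma rfun_mono {c : ℝ} (hc : 0 < c) : StrictMono (rfun c) := by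
  intro x y hxy
  have hdx := denom_pos hc x
  have hdy := denom_pos hc y
  have hexy : Real.exp x < Real.exp y := Real.exp_lt_exp.mpr hxy
  rw [rfun, rfun, div_lt_div_iff₀ hdx hdy]
  nlinarith

lemma rder_pos {c : ℝ} (hc : 0 < c) (x : ℝ) : 0 < rder c x := by
  have := Real.exp_pos x; have := denom_pos hc x
  rw [rder]; positivity

lemma rder_le_one {c : ℝ} (hc : 1 ≤ c) (x : ℝ) : rder c x ≤ 1 := by
  have hd := denom_pos (by linarith : (0:ℝ) < c) x
  have he := Real.exp_pos x
  rw [rder, div_le_one (by positivity)]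
  nlinarith

lemma rder_zero {c : ℝ} (hc : 1 ≤ c) : rder c 0 = 1 / (1 + c) := by
  rw [rder, Real.exp_zero]
  field_simp

lemma hasDerivAt_rfun {c : ℝ} (hc : 0 < c) (x : ℝ) :
    HasDerivAt (rfun c) (rder c x) x := by
  have hd := denom_pos hc x
  have h1 : HasDerivAt (fun x => Real.exp x - 1) (Real.exp x) x :=
    (Real.hasDerivAt_exp x).sub_const 1
  have h2 : HasDerivAt (fun x => Real.exp x + c) (Real.exp x) x :=
    (Real.hasDerivAt_exp x).add_const c
  have := h1.div h2 hd.ne'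
  refine this.congr_deriv ?_
  rw [rder]; field_simp; ring

lemma continuous_rfun {c : ℝ} (hc : 0 < c) : Continuous (rfun c) := by
  apply Continuous.div (by continuity) (by continuity)
  intro x; exact (denom_pos hc x).ne'

lemma continuous_rder {c : ℝ} (hc : 0 < c) : Continuous (rder c) := by
  apply Continuous.div (by continuity) (by continuity)
  intro x; exact (pow_pos (denom_pos hc x) 2).ne'
noncomputable def Ffun {Ω : Type*} [MeasurableSpace Ω] (μ : Measure Ω)
    (W : Ω → ℝ) (q : ℕ) (t : ℝ) : ℝ :=
  ∫ ω, (W ω / (∫ ω', W ω' ∂μ)) * (Real.exp (t * W ω) - 1) /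
    (Real.exp (t * W ω) + q - 1) ∂μ

noncomputable def Fder {Ω : Type*} [MeasurableSpace Ω] (μ : Measure Ω)
    (W : Ω → ℝ) (q : ℕ) (t : ℝ) : ℝ :=
  ∫ ω, (W ω ^ 2 / (∫ ω', W ω' ∂μ)) * rder ((q : ℝ) - 1) (t * W ω) ∂μ

section Fprops

variable {Ω : Type*} [MeasurableSpace Ω] (μ : Measure Ω) [IsProbabilityMeasure μ]
  (W : Ω → ℝ) (q : ℕ)

lemma Ffun_eq (t : ℝ) :
    Ffun μ W q t = ∫ ω, (W ω / (∫ ω', W ω' ∂μ)) * rfun ((q : ℝ) - 1) (t * W ω) ∂μ := by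
  unfold Ffun rfun
  congr 1
  funext ω
  rw [mul_div_assoc]
  congr 2
  ring

lemma hc_ge (hq : 3 ≤ q) : (1 : ℝ) ≤ (q : ℝ) - 1 := by
  have : (3 : ℝ) ≤ (q : ℝ) := by exact_mod_cast hq
  linarith

lemma f_meas (hWmeas : Measurable W) (hq : 3 ≤ q) (t : ℝ) :
    AEStronglyMeasurable (fun ω => (W ω / (∫ ω', W ω' ∂μ)) * rfun ((q : ℝ) - 1) (t * W ω)) μ := by
  apply Measurable.aestronglyMeasurable
  exact (hWmeas.div_const _).mul
    ((continuous_rfun (by have := hc_ge q hq; linarith)).measurable.comp (measurable_const.mul hWmeas))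

lemma fd_meas (hWmeas : Measurable W) (hq : 3 ≤ q) (t : ℝ) :
    AEStronglyMeasurable (fun ω => (W ω ^ 2 / (∫ ω', W ω' ∂μ)) * rder ((q : ℝ) - 1) (t * W ω)) μ := by
  apply Measurable.aestronglyMeasurable
  exact ((hWmeas.pow_const 2).div_const _).mul
    ((continuous_rder (by have := hc_ge q hq; linarith)).measurable.comp (measurable_const.mul hWmeas))

lemma f_int (hWmeas : Measurable W) (hWnn : ∀ ω, 0 ≤ W ω)
    (hWint : Integrable W μ) (hEW : 0 < ∫ ω, W ω ∂μ) (hq : 3 ≤ q) (t : ℝ) :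
    Integrable (fun ω => (W ω / (∫ ω', W ω' ∂μ)) * rfun ((q : ℝ) - 1) (t * W ω)) μ := by
  apply Integrable.mono' (hWint.div_const (∫ ω', W ω' ∂μ)) (f_meas μ W q hWmeas hq t)
  filter_upwards with ω
  rw [norm_mul, Real.norm_eq_abs, Real.norm_eq_abs, abs_of_nonneg (div_nonneg (hWnn ω) hEW.le)]
  calc W ω / (∫ ω', W ω' ∂μ) * |rfun ((q : ℝ) - 1) (t * W ω)|
      ≤ W ω / (∫ ω', W ω' ∂μ) * 1 := by
        apply mul_le_mul_of_nonneg_left (abs_rfun_le_one (hc_ge q hq) _)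
          (div_nonneg (hWnn ω) hEW.le)
    _ = W ω / (∫ ω', W ω' ∂μ) := mul_one _

lemma fd_int (hWmeas : Measurable W) (hEW : 0 < ∫ ω, W ω ∂μ)
    (hW2 : Integrable (fun ω => (W ω) ^ 2) μ) (hq : 3 ≤ q) (t : ℝ) :
    Integrable (fun ω => (W ω ^ 2 / (∫ ω', W ω' ∂μ)) * rder ((q : ℝ) - 1) (t * W ω)) μ := by
  apply Integrable.mono' (hW2.div_const (∫ ω', W ω' ∂μ)) (fd_meas μ W q hWmeas hq t)
  filter_upwards with ω
  have hWnn2 : (0:ℝ) ≤ W ω ^ 2 / (∫ ω', W ω' ∂μ) := div_nonneg (sq_nonneg _) hEW.le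
  have hc1 : (1:ℝ) ≤ (q : ℝ) - 1 := hc_ge q hq
  have hrp := rder_pos (by linarith : (0:ℝ) < (q:ℝ) - 1) (t * W ω)
  rw [norm_mul, Real.norm_eq_abs, Real.norm_eq_abs, abs_of_nonneg hWnn2, abs_of_pos hrp]
  calc W ω ^ 2 / (∫ ω', W ω' ∂μ) * rder ((q : ℝ) - 1) (t * W ω)
      ≤ W ω ^ 2 / (∫ ω', W ω' ∂μ) * 1 :=
        mul_le_mul_of_nonneg_left (rder_le_one hc1 _) hWnn2
    _ = W ω ^ 2 / (∫ ω', W ω' ∂μ) := mul_one _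

lemma hasDerivAt_Ffun (hWmeas : Measurable W) (hWnn : ∀ ω, 0 ≤ W ω)
    (hWint : Integrable W μ) (hEW : 0 < ∫ ω, W ω ∂μ)
    (hW2 : Integrable (fun ω => (W ω) ^ 2) μ) (hq : 3 ≤ q) (t : ℝ) :
    HasDerivAt (Ffun μ W q) (Fder μ W q t) t := by
  have hc1 : (1:ℝ) ≤ (q : ℝ) - 1 := hc_ge q hq
  have key := hasDerivAt_integral_of_dominated_loc_of_deriv_le (μ := μ)
    (F := fun t ω => (W ω / (∫ ω', W ω' ∂μ)) * rfun ((q : ℝ) - 1) (t * W ω))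
    (F' := fun t ω => (W ω ^ 2 / (∫ ω', W ω' ∂μ)) * rder ((q : ℝ) - 1) (t * W ω))
    (bound := fun ω => W ω ^ 2 / (∫ ω', W ω' ∂μ)) (x₀ := t) (s := Metric.ball t 1) (Metric.ball_mem_nhds t one_pos)
    (Eventually.of_forall fun s => f_meas μ W q hWmeas hq s)
    (f_int μ W q hWmeas hWnn hWint hEW hq t)
    (fd_meas μ W q hWmeas hq t)
    ?_ (hW2.div_const _) ?_
  · have := key.2
    rw [funext (Ffun_eq μ W q)]
    exact this
  · filter_upwards with ω s _
    have hWnn2 : (0:ℝ) ≤ W ω ^ 2 / (∫ ω', W ω' ∂μ) := div_nonneg (sq_nonneg _) hEW.le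
    have hrp := rder_pos (by linarith : (0:ℝ) < (q:ℝ) - 1) (s * W ω)
    rw [norm_mul, Real.norm_eq_abs, Real.norm_eq_abs, abs_of_nonneg hWnn2, abs_of_pos hrp]
    calc W ω ^ 2 / (∫ ω', W ω' ∂μ) * rder ((q : ℝ) - 1) (s * W ω)
        ≤ W ω ^ 2 / (∫ ω', W ω' ∂μ) * 1 :=
          mul_le_mul_of_nonneg_left (rder_le_one hc1 _) hWnn2
      _ = W ω ^ 2 / (∫ ω', W ω' ∂μ) := mul_one _
  · filter_upwards with ω s _
    have h1 : HasDerivAt (fun u : ℝ => u * W ω) (W ω) s := by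
      simpa using (hasDerivAt_id s).mul_const (W ω)
    have h2 := ((hasDerivAt_rfun (by linarith : (0:ℝ) < (q:ℝ) - 1) (s * W ω)).comp s h1).const_mul
      (W ω / (∫ ω', W ω' ∂μ))
    refine h2.congr_deriv ?_
    field_simp

end Fprops
section Fprops2

variable {Ω : Type*} [MeasurableSpace Ω] (μ : Measure Ω) [IsProbabilityMeasure μ]
  (W : Ω → ℝ) (q : ℕ)

lemma supp_pos (hWnn : ∀ ω, 0 ≤ W ω) (hWint : Integrable W μ)
    (hEW : 0 < ∫ ω, W ω ∂μ) : 0 < μ (Function.support W) :=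
  (integral_pos_iff_support_of_nonneg (fun ω => hWnn ω) hWint).mp hEW

lemma integral_pos_aux (hWnn : ∀ ω, 0 ≤ W ω) (hWint : Integrable W μ)
    (hEW : 0 < ∫ ω, W ω ∂μ) (h : Ω → ℝ) (hint : Integrable h μ)
    (hnn : ∀ ω, 0 ≤ h ω) (hpos : ∀ ω, 0 < W ω → 0 < h ω) :
    0 < ∫ ω, h ω ∂μ := by
  rw [integral_pos_iff_support_of_nonneg (fun ω => hnn ω) hint]
  have hsub : Function.support W ⊆ Function.support h := by
    intro ω hω
    have : 0 < W ω := lt_of_le_of_ne (hWnn ω) (Ne.symm hω)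
    exact (hpos ω this).ne'
  exact lt_of_lt_of_le (supp_pos μ W hWnn hWint hEW) (measure_mono hsub)

lemma Ffun_zero : Ffun μ W q 0 = 0 := by
  rw [Ffun_eq]
  simp [rfun_zero]

lemma Ffun_le_one (hWmeas : Measurable W) (hWnn : ∀ ω, 0 ≤ W ω)
    (hWint : Integrable W μ) (hEW : 0 < ∫ ω, W ω ∂μ) (hq : 3 ≤ q) (t : ℝ) :
    Ffun μ W q t ≤ 1 := by
  rw [Ffun_eq]
  have h1 : (∫ ω, W ω / (∫ ω', W ω' ∂μ) ∂μ) = 1 := by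
    rw [integral_div, div_self hEW.ne']
  refine le_trans (integral_mono (f_int μ W q hWmeas hWnn hWint hEW hq t)
    (hWint.div_const (∫ ω', W ω' ∂μ)) ?_) (le_of_eq h1)
  intro ω
  have hc1 : (1:ℝ) ≤ (q : ℝ) - 1 := hc_ge q hq
  have hWE : 0 ≤ W ω / (∫ ω', W ω' ∂μ) := div_nonneg (hWnn ω) hEW.le
  calc W ω / (∫ ω', W ω' ∂μ) * rfun ((q:ℝ) - 1) (t * W ω)
      ≤ W ω / (∫ ω', W ω' ∂μ) * 1 :=
        mul_le_mul_of_nonneg_left (rfun_lt_one (by linarith) _).le hWE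
    _ = _ := mul_one _

lemma Ffun_monotone (hWmeas : Measurable W) (hWnn : ∀ ω, 0 ≤ W ω)
    (hWint : Integrable W μ) (hEW : 0 < ∫ ω, W ω ∂μ) (hq : 3 ≤ q) :
    MonotoneOn (Ffun μ W q) (Ici (0:ℝ)) := by
  rintro t₁ ht₁ t₂ _ h12
  rw [Ffun_eq, Ffun_eq]
  apply integral_mono (f_int μ W q hWmeas hWnn hWint hEW hq t₁)
    (f_int μ W q hWmeas hWnn hWint hEW hq t₂)
  intro ω
  have hWE : 0 ≤ W ω / (∫ ω', W ω' ∂μ) := div_nonneg (hWnn ω) hEW.le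
  have hc1 : (1:ℝ) ≤ (q : ℝ) - 1 := hc_ge q hq
  exact mul_le_mul_of_nonneg_left
    ((rfun_mono (by linarith)).monotone (mul_le_mul_of_nonneg_right h12 (hWnn ω))) hWE

lemma Ffun_pos (hWmeas : Measurable W) (hWnn : ∀ ω, 0 ≤ W ω)
    (hWint : Integrable W μ) (hEW : 0 < ∫ ω, W ω ∂μ) (hq : 3 ≤ q)
    {t : ℝ} (ht : 0 < t) : 0 < Ffun μ W q t := by
  have hc1 : (1:ℝ) ≤ (q : ℝ) - 1 := hc_ge q hq
  rw [Ffun_eq]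
  apply integral_pos_aux μ W hWnn hWint hEW _ (f_int μ W q hWmeas hWnn hWint hEW hq t)
  · intro ω
    exact mul_nonneg (div_nonneg (hWnn ω) hEW.le)
      (rfun_nonneg (by linarith) (mul_nonneg ht.le (hWnn ω)))
  · intro ω hW
    apply mul_pos (div_pos hW hEW)
    have := rfun_mono (by linarith : (0:ℝ) < (q:ℝ)-1) (show (0:ℝ) < t * W ω from mul_pos ht hW)
    rwa [rfun_zero] at this

lemma Fder_cont (hWmeas : Measurable W) (hEW : 0 < ∫ ω, W ω ∂μ)
    (hW2 : Integrable (fun ω => (W ω) ^ 2) μ) (hq : 3 ≤ q) :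
    Continuous (Fder μ W q) := by
  have hc1 : (1:ℝ) ≤ (q : ℝ) - 1 := hc_ge q hq
  apply continuous_of_dominated (bound := fun ω => W ω ^ 2 / (∫ ω', W ω' ∂μ))
    (fun t => fd_meas μ W q hWmeas hq t)
  · intro t
    filter_upwards with ω
    have hWnn2 : (0:ℝ) ≤ W ω ^ 2 / (∫ ω', W ω' ∂μ) := div_nonneg (sq_nonneg _) hEW.le
    have hrp := rder_pos (by linarith : (0:ℝ) < (q:ℝ) - 1) (t * W ω)
    rw [norm_mul, Real.norm_eq_abs, Real.norm_eq_abs, abs_of_nonneg hWnn2, abs_of_pos hrp]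
    calc W ω ^ 2 / (∫ ω', W ω' ∂μ) * rder ((q : ℝ) - 1) (t * W ω)
        ≤ W ω ^ 2 / (∫ ω', W ω' ∂μ) * 1 :=
          mul_le_mul_of_nonneg_left (rder_le_one hc1 _) hWnn2
      _ = _ := mul_one _
  · exact hW2.div_const _
  · filter_upwards with ω
    exact continuous_const.mul
      ((continuous_rder (by linarith)).comp (continuous_id.mul continuous_const))

lemma Fder_pos (hWmeas : Measurable W) (hWnn : ∀ ω, 0 ≤ W ω)
    (hWint : Integrable W μ) (hEW : 0 < ∫ ω, W ω ∂μ)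
    (hW2 : Integrable (fun ω => (W ω) ^ 2) μ) (hq : 3 ≤ q) (t : ℝ) :
    0 < Fder μ W q t := by
  have hc1 : (1:ℝ) ≤ (q : ℝ) - 1 := hc_ge q hq
  apply integral_pos_aux μ W hWnn hWint hEW _ (fd_int μ W q hWmeas hEW hW2 hq t)
  · intro ω
    exact mul_nonneg (div_nonneg (sq_nonneg _) hEW.le)
      (rder_pos (by linarith) _).le
  · intro ω hW
    exact mul_pos (div_pos (pow_pos hW 2) hEW) (rder_pos (by linarith) _)

end Fprops2
def statEq {Ω : Type*} [MeasurableSpace Ω] (μ : Measure Ω)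
    (W : Ω → ℝ) (q : ℕ) (β : ℝ) (s : ℝ) : Prop :=
  (∫ ω, (W ω / (∫ ω', W ω' ∂μ)) * (Real.exp ((Real.exp β - 1) * W ω * s) - 1) /
    (Real.exp ((Real.exp β - 1) * W ω * s) + q - 1) ∂μ) = s

lemma statEq_iff {Ω : Type*} [MeasurableSpace Ω] (μ : Measure Ω)
    (W : Ω → ℝ) (q : ℕ) (β s : ℝ) :
    statEq μ W q β s ↔ Ffun μ W q ((Real.exp β - 1) * s) = s := by
  unfold statEq Ffun
  have h : ∀ ω, (Real.exp β - 1) * W ω * s = (Real.exp β - 1) * s * W ω := fun ω => by ring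
  simp only [h]

set_option maxHeartbeats 2000000 in
/-- **Stationary solutions in zero field**: under the unique zero-crossing condition,
there are `β₀ < β₁` so that the stationarity equation has one, three, or two
solutions in `[0,1]` according to the position of `β`. -/
theorem stationary_solutions_zero_field
    {Ω : Type*} [MeasurableSpace Ω] (μ : Measure Ω) [IsProbabilityMeasure μ]
    (W : Ω → ℝ) (hWmeas : Measurable W) (hWnn : ∀ ω, 0 ≤ W ω)
    (hWint : Integrable W μ) (hEW : 0 < ∫ ω, W ω ∂μ)
    (hW2 : Integrable (fun ω => (W ω) ^ 2) μ)
    (q : ℕ) (hq : 3 ≤ q)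
    (tstar : ℝ) (htstar : 0 < tstar)
    (hconvex : ∀ t : ℝ, 0 < t → t < tstar → 0 < deriv (deriv (Ffun μ W q)) t)
    (hconcave : ∀ t : ℝ, tstar < t → deriv (deriv (Ffun μ W q)) t < 0) :
    ∃ β₀ β₁ : ℝ, 0 < β₀ ∧ β₀ < β₁ ∧
      (∀ β : ℝ, 0 < β → β < β₀ →
        {s : ℝ | s ∈ Icc (0 : ℝ) 1 ∧ statEq μ W q β s} = {0}) ∧
      (∀ β : ℝ, β₀ < β → β < β₁ → ∃ s₂ s₃ : ℝ, 0 < s₂ ∧ s₂ < s₃ ∧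
        {s : ℝ | s ∈ Icc (0 : ℝ) 1 ∧ statEq μ W q β s} = {0, s₂, s₃}) ∧
      (∀ β : ℝ, β₁ < β → ∃ s₃ : ℝ, 0 < s₃ ∧
        {s : ℝ | s ∈ Icc (0 : ℝ) 1 ∧ statEq μ W q β s} = {0, s₃}) := by
  classical
  set F := Ffun μ W q with hFdef
  set F' := Fder μ W q with hF'def
  have dF : ∀ t, HasDerivAt F (F' t) t :=
    fun t => hasDerivAt_Ffun μ W q hWmeas hWnn hWint hEW hW2 hq t
  have hFcont : Continuous F :=
    continuous_iff_continuousAt.mpr fun t => (dF t).differentiableAt.continuousAt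
  have hderivF : deriv F = F' := funext fun t => (dF t).deriv
  have hF'cont : Continuous F' := Fder_cont μ W q hWmeas hEW hW2 hq
  have hF0 : F 0 = 0 := Ffun_zero μ W q
  have hFle1 : ∀ t, F t ≤ 1 := fun t => Ffun_le_one μ W q hWmeas hWnn hWint hEW hq t
  have hFpos : ∀ t : ℝ, 0 < t → 0 < F t :=
    fun t ht => Ffun_pos μ W q hWmeas hWnn hWint hEW hq ht
  have hF'pos : ∀ t, 0 < F' t :=
    fun t => Fder_pos μ W q hWmeas hWnn hWint hEW hW2 hq t
  set A := F' 0 with hAdef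
  have hA : 0 < A := hF'pos 0
  -- strict monotonicity of F' on the two pieces
  have sm1 : StrictMonoOn F' (Icc 0 tstar) := by
    apply strictMonoOn_of_deriv_pos (convex_Icc 0 tstar) hF'cont.continuousOn
    intro t ht
    rw [interior_Icc] at ht
    have := hconvex t ht.1 ht.2
    rwa [hderivF] at this
  have sa1 : StrictAntiOn F' (Ici tstar) := by
    apply strictAntiOn_of_deriv_neg (convex_Ici tstar) hF'cont.continuousOn
    intro t ht
    rw [interior_Ici] at ht
    have := hconcave t ht
    rwa [hderivF] at this
  -- mean value theorem helper
  have mvt : ∀ a b : ℝ, a < b → ∃ ξ ∈ Ioo a b, F' ξ = (F b - F a) / (b - a) :=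
    fun a b hab => exists_hasDerivAt_eq_slope F F' hab hFcont.continuousOn
      (fun x _ => dF x)
  -- the auxiliary function g
  set g : ℝ → ℝ := fun t => t * F' t - F t with hgdef
  have hgcont : Continuous g := (continuous_id.mul hF'cont).sub hFcont
  have hgpos : ∀ t, 0 < t → t ≤ tstar → 0 < g t := by
    intro t ht hts
    obtain ⟨ξ, hξ, hs⟩ := mvt 0 t ht
    have h1 : F' ξ < F' t :=
      sm1 ⟨hξ.1.le, hξ.2.le.trans hts⟩ ⟨ht.le, hts⟩ hξ.2
    rw [hF0, sub_zero, sub_zero, eq_div_iff ht.ne'] at hs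
    simp only [hgdef]
    nlinarith
  have hganti : StrictAntiOn g (Ici tstar) := by
    intro t₁ h₁ t₂ h₂ h12
    simp only [mem_Ici] at h₁ h₂
    obtain ⟨ξ, hξ, hs⟩ := mvt t₁ t₂ h12
    have hξ1 : F' t₂ < F' ξ :=
      sa1 (mem_Ici.mpr (by linarith [hξ.1] : tstar ≤ ξ)) (mem_Ici.mpr (by linarith)) hξ.2
    have hξ2 : F' ξ < F' t₁ :=
      sa1 (mem_Ici.mpr h₁) (mem_Ici.mpr (by linarith [hξ.1])) hξ.1
    rw [eq_div_iff (sub_ne_zero.mpr h12.ne')] at hs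
    have ht₁ : 0 < t₁ := lt_of_lt_of_le htstar h₁
    simp only [hgdef]
    nlinarith
  -- F is globally strictly monotone, bounded
  have hFsm : StrictMono F := by
    apply strictMono_of_deriv_pos
    rw [hderivF]; exact hF'pos
  have hFmono : Monotone F := hFsm.monotone
  have hbdd : BddAbove (Set.range F) := ⟨1, by rintro y ⟨t, rfl⟩; exact hFle1 t⟩
  have hL : Tendsto F atTop (𝓝 (⨆ t, F t)) := tendsto_atTop_ciSup hFmono hbdd
  set L := ⨆ t, F t with hLdef
  have hLpos : 0 < L := lt_of_lt_of_le (hFpos 1 one_pos) (le_ciSup hbdd 1)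
  have hLub : ∀ t, F t ≤ L := fun t => le_ciSup hbdd t
  -- find T with g (2 T) < 0
  obtain ⟨T, hT1, hT2⟩ : ∃ T, L / 2 < F T ∧ tstar + 1 ≤ T := by
    have h1 : ∀ᶠ T in atTop, L / 2 < F T := hL.eventually_const_lt (by linarith)
    exact (h1.and (eventually_ge_atTop (tstar + 1))).exists
  have hTpos : 0 < T := by linarith
  have hg2T : g (2 * T) < 0 := by
    obtain ⟨ξ, hξ, hs⟩ := mvt T (2 * T) (by linarith)
    have hξ1 : F' (2 * T) < F' ξ :=
      sa1 (mem_Ici.mpr (by linarith [hξ.1] : tstar ≤ ξ)) (mem_Ici.mpr (by linarith)) hξ.2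
    rw [eq_div_iff (by linarith : 2 * T - T ≠ 0)] at hs
    have := hLub (2 * T)
    simp only [hgdef]
    nlinarith
  -- the crossing point t₀ of g
  obtain ⟨t₀, ht₀mem, hgt₀⟩ : ∃ t₀ ∈ Icc tstar (2 * T), g t₀ = 0 := by
    have hsub : (0:ℝ) ∈ Icc (g (2 * T)) (g tstar) :=
      ⟨hg2T.le, (hgpos tstar htstar le_rfl).le⟩
    have := intermediate_value_Icc' (by linarith : tstar ≤ 2 * T) hgcont.continuousOn hsub
    obtain ⟨t₀, ht₀, h⟩ := this
    exact ⟨t₀, ht₀, h⟩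
  have ht₀star : tstar < t₀ := by
    rcases eq_or_lt_of_le ht₀mem.1 with h | h
    · exfalso; rw [← h] at hgt₀; linarith [hgpos tstar htstar le_rfl]
    · exact h
  have ht₀pos : 0 < t₀ := htstar.trans ht₀star
  have hgneg' : ∀ t, t₀ < t → g t < 0 := by
    intro t ht
    have := hganti (mem_Ici.mpr ht₀star.le) (mem_Ici.mpr (by linarith)) ht
    rwa [hgt₀] at this
  have hgpos' : ∀ t, 0 < t → t < t₀ → 0 < g t := by
    intro t ht htt₀
    rcases le_or_gt t tstar with h | h
    · exact hgpos t ht h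
    · have := hganti (mem_Ici.mpr h.le) (mem_Ici.mpr ht₀star.le) htt₀
      rwa [hgt₀] at this
  -- the secant slope function φ
  set φ : ℝ → ℝ := fun t => F t / t with hφdef
  have dφ : ∀ t : ℝ, 0 < t → HasDerivAt φ (g t / t ^ 2) t := by
    intro t ht
    have h := (dF t).div (hasDerivAt_id t) ht.ne'
    refine h.congr_deriv ?_
    simp only [hgdef, id]
    field_simp
  have hφcont : ContinuousOn φ (Ioi (0:ℝ)) := by
    apply ContinuousOn.div hFcont.continuousOn continuousOn_id
    intro x hx; exact (mem_Ioi.mp hx).ne'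
  have φm : StrictMonoOn φ (Ioc 0 t₀) := by
    apply strictMonoOn_of_deriv_pos (convex_Ioc 0 t₀)
      (hφcont.mono (fun x hx => hx.1))
    intro t ht
    rw [interior_Ioc] at ht
    rw [(dφ t ht.1).deriv]
    exact div_pos (hgpos' t ht.1 ht.2) (pow_pos ht.1 2)
  have φa : StrictAntiOn φ (Ici t₀) := by
    apply strictAntiOn_of_deriv_neg (convex_Ici t₀)
      (hφcont.mono (fun x hx => lt_of_lt_of_le ht₀pos hx))
    intro t ht
    rw [interior_Ici] at ht
    rw [(dφ t (ht₀pos.trans ht)).deriv]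
    exact div_neg_of_neg_of_pos (hgneg' t ht) (pow_pos (ht₀pos.trans ht) 2)
  -- limit of φ at 0⁺ is A
  have hφ0 : Tendsto φ (𝓝[>] (0:ℝ)) (𝓝 A) := by
    have h := hasDerivAt_iff_tendsto_slope.mp (dF 0)
    have h2 : Tendsto (slope F 0) (𝓝[>] (0:ℝ)) (𝓝 A) :=
      h.mono_left (nhdsWithin_mono 0 (fun x hx => mem_setOf.mpr (mem_Ioi.mp hx).ne'))
    apply h2.congr'
    filter_upwards [self_mem_nhdsWithin] with t ht
    simp only [slope_def_field, hφdef]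
    rw [hF0]
    field_simp
    simp only [sub_zero]
  have hφgtA : ∀ t, 0 < t → t ≤ t₀ → A < φ t := by
    intro t ht htt₀
    have h2 : φ (t / 2) < φ t := φm ⟨by linarith, by linarith⟩ ⟨ht, htt₀⟩ (by linarith)
    have hle : A ≤ φ (t / 2) := by
      apply le_of_tendsto hφ0
      have hIoo : Ioo (0:ℝ) (t / 2) ∈ 𝓝[>] (0:ℝ) :=
        Ioo_mem_nhdsGT_of_mem ⟨le_rfl, by linarith⟩
      filter_upwards [hIoo] with s hs
      exact (φm ⟨hs.1, by linarith [hs.2]⟩ ⟨by linarith, by linarith⟩ hs.2).le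
    linarith
  set M := φ t₀ with hMdef
  have hMA : A < M := hφgtA t₀ ht₀pos le_rfl
  have hMpos : 0 < M := hA.trans hMA
  have hMmax : ∀ t, 0 < t → φ t ≤ M := by
    intro t ht
    rcases le_or_gt t t₀ with h | h
    · exact φm.monotoneOn ⟨ht, h⟩ ⟨ht₀pos, le_rfl⟩ h
    · exact (φa (mem_Ici.mpr le_rfl) (mem_Ici.mpr h.le) h).le
  -- φ tends to 0 at infinity
  have hφtop : Tendsto φ atTop (𝓝 0) := by
    apply squeeze_zero' (g := fun t : ℝ => 1 / t)
    · filter_upwards [eventually_gt_atTop (0:ℝ)] with t ht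
      exact div_nonneg (hFpos t ht).le ht.le
    · filter_upwards [eventually_gt_atTop (0:ℝ)] with t ht
      exact (div_le_div_iff_of_pos_right ht).mpr (hFle1 t)
    · simpa only [one_div] using tendsto_inv_atTop_zero
  -- characterization of solutions
  have hchar : ∀ β : ℝ, 0 < Real.exp β - 1 → ∀ s : ℝ,
      (s ∈ Icc (0:ℝ) 1 ∧ statEq μ W q β s) ↔
      (s = 0 ∨ ∃ t : ℝ, 0 < t ∧ φ t = 1 / (Real.exp β - 1) ∧ s = F t) := by
    intro β hb s
    set b := Real.exp β - 1 with hbdef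
    rw [statEq_iff, ← hFdef]
    constructor
    · rintro ⟨⟨hs0, hs1⟩, heq⟩
      rcases eq_or_lt_of_le hs0 with h | h
      · exact Or.inl h.symm
      · refine Or.inr ⟨b * s, mul_pos hb h, ?_, ?_⟩
        · simp only [hφdef]
          rw [heq, div_eq_div_iff (mul_pos hb h).ne' hb.ne']
          ring
        · rw [heq]
    · rintro (rfl | ⟨t, ht, hφt, rfl⟩)
      · refine ⟨⟨le_rfl, zero_le_one⟩, ?_⟩
        rw [mul_zero, hF0]
      · have h' : F t / t = 1 / b := hφt
        rw [div_eq_div_iff ht.ne' hb.ne'] at h'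
        have hbs : b * F t = t := by linarith [h']
        refine ⟨⟨(hFpos t ht).le, hFle1 t⟩, ?_⟩
        rw [hbs]
  -- definition of β₀ and β₁
  refine ⟨Real.log (1 + 1 / M), Real.log (1 + 1 / A), ?_, ?_, ?_, ?_, ?_⟩
  · exact Real.log_pos (by have := one_div_pos.mpr hMpos; linarith)
  · apply Real.log_lt_log (by have := one_div_pos.mpr hMpos; linarith)
    have : 1 / M < 1 / A := one_div_lt_one_div_of_lt hA hMA
    linarith
  -- case 1 : only the trivial solution
  · intro β hβpos hβ
    set b := Real.exp β - 1 with hbdef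
    have hb : 0 < b := by
      have h := Real.exp_lt_exp.mpr hβpos
      rw [Real.exp_zero] at h
      simp only [hbdef]
      linarith
    have hbM : M < 1 / b := by
      have h1 : Real.exp β < 1 + 1 / M := by
        have := Real.exp_lt_exp.mpr hβ
        rwa [Real.exp_log (by have := one_div_pos.mpr hMpos; linarith)] at this
      have h2 : b < 1 / M := by simp only [hbdef]; linarith
      rw [lt_div_iff₀ hb]
      rw [lt_div_iff₀ hMpos] at h2
      nlinarith
    ext s
    simp only [mem_setOf_eq, mem_singleton_iff]
    rw [show (s ∈ Icc (0:ℝ) 1 ∧ statEq μ W q β s) ↔ _ from hchar β hb s]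
    constructor
    · rintro (h | ⟨t, ht, hφt, rfl⟩)
      · exact h
      · exfalso
        have := hMmax t ht
        rw [hφt] at this
        linarith
    · rintro rfl; exact Or.inl rfl
  -- case 2 : three solutions
  · intro β hβ₀ hβ₁
    set b := Real.exp β - 1 with hbdef
    have hbM : 1 / M < b := by
      have h1 : 1 + 1 / M < Real.exp β := by
        have := Real.exp_lt_exp.mpr hβ₀
        rwa [Real.exp_log (by have := one_div_pos.mpr hMpos; linarith)] at this
      simp only [hbdef]; linarith
    have hb : 0 < b := lt_trans (one_div_pos.mpr hMpos) hbM
    have hbA : b < 1 / A := by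
      have h1 : Real.exp β < 1 + 1 / A := by
        have := Real.exp_lt_exp.mpr hβ₁
        rwa [Real.exp_log (by have := one_div_pos.mpr hA; linarith)] at this
      simp only [hbdef]; linarith
    have hyM : 1 / b < M := by
      rw [div_lt_iff₀ hb]
      rw [div_lt_iff₀ hMpos] at hbM
      nlinarith
    have hyA : A < 1 / b := by
      rw [lt_div_iff₀ hb]
      rw [lt_div_iff₀ hA] at hbA
      nlinarith
    have hy0 : 0 < 1 / b := one_div_pos.mpr hb
    -- find t₂ on the increasing branch
    obtain ⟨a, ha1, ha2⟩ : ∃ a, φ a < 1 / b ∧ a ∈ Ioo (0:ℝ) t₀ := by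
      have h1 : ∀ᶠ s in 𝓝[>] (0:ℝ), φ s < 1 / b := hφ0.eventually_lt_const hyA
      have h2 : Ioo (0:ℝ) t₀ ∈ 𝓝[>] (0:ℝ) := Ioo_mem_nhdsGT_of_mem ⟨le_rfl, ht₀pos⟩
      exact (h1.and h2).exists
    obtain ⟨t₂, ht₂mem, hφt₂⟩ : ∃ t₂ ∈ Ioo a t₀, φ t₂ = 1 / b := by
      have hc : ContinuousOn φ (Icc a t₀) :=
        hφcont.mono (fun x hx => lt_of_lt_of_le ha2.1 hx.1)
      have h := intermediate_value_Ioo ha2.2.le hc (a := a) (b := t₀)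
      exact h ⟨ha1, hyM⟩ |>.imp (fun x hx => ⟨hx.1, hx.2⟩)
    have ht₂pos : 0 < t₂ := ha2.1.trans ht₂mem.1
    -- find t₃ on the decreasing branch
    obtain ⟨X, hX1, hX2⟩ : ∃ X, φ X < 1 / b ∧ t₀ < X := by
      have h1 : ∀ᶠ X in atTop, φ X < 1 / b := hφtop.eventually_lt_const hy0
      exact (h1.and (eventually_gt_atTop t₀)).exists
    obtain ⟨t₃, ht₃mem, hφt₃⟩ : ∃ t₃ ∈ Ioo t₀ X, φ t₃ = 1 / b := by
      have hc : ContinuousOn φ (Icc t₀ X) :=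
        hφcont.mono (fun x hx => lt_of_lt_of_le ht₀pos hx.1)
      have h := intermediate_value_Ioo' hX2.le hc (a := t₀) (b := X)
      exact h ⟨hX1, hyM⟩ |>.imp (fun x hx => ⟨hx.1, hx.2⟩)
    have ht₃pos : 0 < t₃ := ht₀pos.trans ht₃mem.1
    refine ⟨F t₂, F t₃, hFpos t₂ ht₂pos, hFsm (ht₂mem.2.trans ht₃mem.1), ?_⟩
    ext s
    simp only [mem_setOf_eq, mem_insert_iff, mem_singleton_iff]
    rw [show (s ∈ Icc (0:ℝ) 1 ∧ statEq μ W q β s) ↔ _ from hchar β hb s]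
    constructor
    · rintro (h | ⟨t, ht, hφt, rfl⟩)
      · exact Or.inl h
      · rcases le_or_gt t t₀ with hcase | hcase
        · refine Or.inr (Or.inl ?_)
          have heq : t = t₂ := φm.injOn ⟨ht, hcase⟩ ⟨ht₂pos, ht₂mem.2.le⟩ (by rw [hφt, hφt₂])
          rw [heq]
        · refine Or.inr (Or.inr ?_)
          have heq : t = t₃ := φa.injOn (mem_Ici.mpr hcase.le) (mem_Ici.mpr ht₃mem.1.le)
            (by rw [hφt, hφt₃])
          rw [heq]
    · rintro (rfl | rfl | rfl)
      · exact Or.inl rfl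
      · exact Or.inr ⟨t₂, ht₂pos, hφt₂, rfl⟩
      · exact Or.inr ⟨t₃, ht₃pos, hφt₃, rfl⟩
  -- case 3 : two solutions
  · intro β hβ₁
    set b := Real.exp β - 1 with hbdef
    have hbA : 1 / A < b := by
      have h1 : 1 + 1 / A < Real.exp β := by
        have := Real.exp_lt_exp.mpr hβ₁
        rwa [Real.exp_log (by have := one_div_pos.mpr hA; linarith)] at this
      simp only [hbdef]; linarith
    have hb : 0 < b := lt_trans (one_div_pos.mpr hA) hbA
    have hyA : 1 / b < A := by
      rw [div_lt_iff₀ hb]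
      rw [div_lt_iff₀ hA] at hbA
      nlinarith
    have hy0 : 0 < 1 / b := one_div_pos.mpr hb
    have hyM : 1 / b < M := hyA.trans hMA
    obtain ⟨X, hX1, hX2⟩ : ∃ X, φ X < 1 / b ∧ t₀ < X := by
      have h1 : ∀ᶠ X in atTop, φ X < 1 / b := hφtop.eventually_lt_const hy0
      exact (h1.and (eventually_gt_atTop t₀)).exists
    obtain ⟨t₃, ht₃mem, hφt₃⟩ : ∃ t₃ ∈ Ioo t₀ X, φ t₃ = 1 / b := by
      have hc : ContinuousOn φ (Icc t₀ X) :=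
        hφcont.mono (fun x hx => lt_of_lt_of_le ht₀pos hx.1)
      have h := intermediate_value_Ioo' hX2.le hc (a := t₀) (b := X)
      exact h ⟨hX1, hyM⟩ |>.imp (fun x hx => ⟨hx.1, hx.2⟩)
    have ht₃pos : 0 < t₃ := ht₀pos.trans ht₃mem.1
    refine ⟨F t₃, hFpos t₃ ht₃pos, ?_⟩
    ext s
    simp only [mem_setOf_eq, mem_insert_iff, mem_singleton_iff]
    rw [show (s ∈ Icc (0:ℝ) 1 ∧ statEq μ W q β s) ↔ _ from hchar β hb s]
    constructor
    · rintro (h | ⟨t, ht, hφt, rfl⟩)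
      · exact Or.inl h
      · rcases le_or_gt t t₀ with hcase | hcase
        · exfalso
          have := hφgtA t ht hcase
          rw [hφt] at this
          linarith
        · refine Or.inr ?_
          have heq : t = t₃ := φa.injOn (mem_Ici.mpr hcase.le) (mem_Ici.mpr ht₃mem.1.le)
            (by rw [hφt, hφt₃])
          rw [heq]
    · rintro (rfl | rfl)
      · exact Or.inl rfl
      · exact Or.inr ⟨t₃, ht₃pos, hφt₃, rfl⟩
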